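/- PSPACE-hardness gadget correctness: let L ⊆ Γ* be any language and Σ a two-letter alphabet disjoint from Γ, and consider the transduction R = {(w·a₁⋯aₙ, aₙ⋯a₁) : w ∈ L, a₁,…,aₙ ∈ Σ, n ≥ 0}. If L = ∅ then R = ∅ and R is trivially order-preserving (hence has cross-width 0); if L ≠ ∅ then R contains, for every k, a pair whose natural origin mapping (each output letter aᵢ originating at its input position) has a cross of width k — hence R with these origins has bounded cross-width if and only if L = ∅. -/

import Mathlib

lemma pspace_gadget_aux (m k lo : ℕ) (hlo : lo + k ≤ 2 * k) :
    ((fun x : Fin (2 * k) => m + (2 * k - 1 - x.1)) ''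
      {x : Fin (2 * k) | lo ≤ x.1 ∧ x.1 < lo + k}).ncard = k := by
  have hinj : Set.InjOn (fun x : Fin (2 * k) => m + (2 * k - 1 - x.1))
      {x : Fin (2 * k) | lo ≤ x.1 ∧ x.1 < lo + k} := by
    intro a ha b hb hab
    have h1 : a.1 < 2 * k := a.2
    have h2 : b.1 < 2 * k := b.2
    simp only at hab
    exact Fin.ext (by omega)
  rw [Set.ncard_image_of_injOn hinj]
  have : {x : Fin (2 * k) | lo ≤ x.1 ∧ x.1 < lo + k} =
      Set.range (fun i : Fin k => (⟨lo + i.1, by omega⟩ : Fin (2 * k))) := by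
    ext x
    simp only [Set.mem_setOf_eq, Set.mem_range]
    constructor
    · rintro ⟨h1, h2⟩
      exact ⟨⟨x.1 - lo, by omega⟩, Fin.ext (by simp [Nat.add_sub_cancel' h1])⟩
    · rintro ⟨i, rfl⟩
      refine ⟨by simp, by simp [i.2]⟩
  have hinj2 : Function.Injective (fun i : Fin k => (⟨lo + i.1, by omega⟩ : Fin (2 * k))) := by
    intro a b hab
    exact Fin.ext (by simpa [Fin.ext_iff] using hab)
  rw [this, ← Set.image_univ, Set.ncard_image_of_injective _ hinj2, Set.ncard_univ]
  simp

lemma pspace_gadget_main (m k n : ℕ) (hn : n = 2 * k) :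
    ∃ X₁ X₂ : Set (Fin n),
      (∀ x₁ ∈ X₁, ∀ x₂ ∈ X₂, x₁ < x₂ ∧
          m + (n - 1 - x₂.1) < m + (n - 1 - x₁.1)) ∧
      k ≤ min
        ((fun x : Fin n => m + (n - 1 - x.1)) '' X₁).ncard
        ((fun x : Fin n => m + (n - 1 - x.1)) '' X₂).ncard := by
  subst hn
  refine ⟨{x | 0 ≤ x.1 ∧ x.1 < 0 + k}, {x | k ≤ x.1 ∧ x.1 < k + k}, ?_, ?_⟩
  · rintro x₁ ⟨-, h1⟩ x₂ ⟨h2, -⟩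
    have h3 : x₂.1 < 2 * k := x₂.2
    exact ⟨Fin.lt_def.mpr (by omega), by omega⟩
  · rw [pspace_gadget_aux m k 0 (by omega), pspace_gadget_aux m k k (by omega)]
    simp

/-- correctness of the PSPACE-hardness gadget.  For
`R = {(w·a₁⋯aₙ, aₙ⋯a₁) : w ∈ L, aᵢ ∈ Σ}` with natural origins
(the j-th output letter `a_{n+1−j}` originating at input position `m + (n+1−j)`,
i.e. 0-indexed output position `j` has origin `m + (n − 1 − j)`):
if `L = ∅` then `R = ∅`; if `L ≠ ∅` then `R` admits crosses of every width `k`;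
hence `R` with these origins has bounded cross-width iff `L = ∅`. -/
theorem pspace_gadget_correctness (Γ : Type) (L : Set (List Γ)) :
    -- (1) if L is empty then R is empty
    (L = ∅ →
      {p : List (Γ ⊕ Bool) × List Bool |
        ∃ w ∈ L, ∃ as : List Bool,
          p = (w.map Sum.inl ++ as.map Sum.inr, as.reverse)} = ∅) ∧
    -- (2) if L is nonempty then R has crosses of every width k
    (L ≠ ∅ → ∀ k : ℕ, ∃ w ∈ L, ∃ as : List Bool, ∃ X₁ X₂ : Set (Fin as.length),
      (∀ x₁ ∈ X₁, ∀ x₂ ∈ X₂, x₁ < x₂ ∧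
          w.length + (as.length - 1 - x₂.1) < w.length + (as.length - 1 - x₁.1)) ∧
      k ≤ min
        ((fun x : Fin as.length => w.length + (as.length - 1 - x.1)) '' X₁).ncard
        ((fun x : Fin as.length => w.length + (as.length - 1 - x.1)) '' X₂).ncard) ∧
    -- (3) hence: bounded cross-width iff L = ∅
    ((∃ c : ℕ, ∀ w ∈ L, ∀ as : List Bool, ∀ X₁ X₂ : Set (Fin as.length),
        (∀ x₁ ∈ X₁, ∀ x₂ ∈ X₂, x₁ < x₂ ∧
            w.length + (as.length - 1 - x₂.1) < w.length + (as.length - 1 - x₁.1)) →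
        min
          ((fun x : Fin as.length => w.length + (as.length - 1 - x.1)) '' X₁).ncard
          ((fun x : Fin as.length => w.length + (as.length - 1 - x.1)) '' X₂).ncard ≤ c)
      ↔ L = ∅) := by
  have part2 : L ≠ ∅ → ∀ k : ℕ, ∃ w ∈ L, ∃ as : List Bool, ∃ X₁ X₂ : Set (Fin as.length),
      (∀ x₁ ∈ X₁, ∀ x₂ ∈ X₂, x₁ < x₂ ∧
          w.length + (as.length - 1 - x₂.1) < w.length + (as.length - 1 - x₁.1)) ∧
      k ≤ min
        ((fun x : Fin as.length => w.length + (as.length - 1 - x.1)) '' X₁).ncard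
        ((fun x : Fin as.length => w.length + (as.length - 1 - x.1)) '' X₂).ncard := by
    intro hL k
    obtain ⟨w, hw⟩ := Set.nonempty_iff_ne_empty.mpr hL
    refine ⟨w, hw, List.replicate (2 * k) false, ?_⟩
    exact pspace_gadget_main w.length k _ List.length_replicate
  refine ⟨?_, part2, ?_, ?_⟩
  · intro hL
    ext p
    simp only [Set.mem_setOf_eq, Set.mem_empty_iff_false, iff_false]
    rintro ⟨w, hw, _⟩
    rw [hL] at hw
    exact hw
  · rintro ⟨c, hc⟩
    by_contra hL
    obtain ⟨w, hw, as, X₁, X₂, hcross, hk⟩ := part2 hL (c + 1)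
    have := hc w hw as X₁ X₂ hcross
    omega
  · intro hL
    refine ⟨0, fun w hw => ?_⟩
    rw [hL] at hw
    exact absurd hw (Set.notMem_empty w)
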